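/- arXiv:1903.00150 — 3 statements merged into one kernel-verified Lean document; each statement's English description precedes it below -/
import Mathlib

section
/- Let $w_1,w_2,w_3,w_4$ and $d$ be positive real numbers with $I:= w_1+w_2+w_3+w_4-d>0$, and set $W_i = 2w_i/I$ and $D = 2d/I$. Then for $H(s)=\frac{1-e^{-Ds}}{\prod_{i=1}^{4}(1-e^{-W_i s})}$ one has $a_0 := \lim_{s\to0^+} s^{3}H(s) = \frac{d\,(w_1+w_2+w_3+w_4-d)^{3}}{8\,w_1 w_2 w_3 w_4}$, and moreover $\lim_{s\to0^+}s^{2}\bigl(H(s)-a_0 s^{-3}\bigr) = a_0$ (i.e. $a_0 = a_1$). -/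
open Filter Real Set

noncomputable def phiAux (x : ℝ) : ℝ := if x = 0 then 1 else (1 - Real.exp (-x)) / x

lemma phiAux_zero : phiAux 0 = 1 := if_pos rfl

lemma phiAux_ne {x : ℝ} (hx : x ≠ 0) : phiAux x = (1 - Real.exp (-x)) / x := if_neg hx

lemma phiAux_pos {x : ℝ} (hx : 0 < x) : 0 < phiAux x := by
  rw [phiAux_ne hx.ne']
  apply div_pos _ hx
  have : Real.exp (-x) < 1 := Real.exp_lt_one_iff.mpr (neg_lt_zero.mpr hx)
  linarith

lemma hasDerivAt_phiAux : HasDerivAt phiAux (-(1/2)) 0 := by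
  rw [hasDerivAt_iff_isLittleO]
  have hO : (fun x : ℝ => phiAux x - phiAux 0 - (x - 0) • (-(1/2) : ℝ))
      =O[nhds 0] (fun x => x ^ 2) := by
    rw [Asymptotics.isBigO_iff]
    refine ⟨1, ?_⟩
    filter_upwards [Metric.ball_mem_nhds (0:ℝ) one_pos] with x hx
    rw [Metric.mem_ball, Real.dist_eq, sub_zero] at hx
    rcases eq_or_ne x 0 with rfl | hx0
    · simp [phiAux_zero]
    · have hb := Real.exp_bound (x := -x) (by rw [abs_neg]; exact hx.le) (n := 3) (by norm_num)
      have hsum : ∑ m ∈ Finset.range 3, (-x) ^ m / (m.factorial : ℝ) = 1 - x + x^2/2 := by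
        simp [Finset.sum_range_succ]
        ring
      rw [hsum, abs_neg] at hb
      have h1 : phiAux x - phiAux 0 - (x - 0) • (-(1/2) : ℝ)
          = -((Real.exp (-x) - (1 - x + x^2/2)) / x) := by
        rw [phiAux_ne hx0, phiAux_zero]
        field_simp
        ring
      rw [h1]; simp only [Real.norm_eq_abs, abs_neg, abs_div]
      rw [div_le_iff₀ (abs_pos.mpr hx0)]
      calc |Real.exp (-x) - (1 - x + x^2/2)| ≤ |x| ^ 3 * ((3:ℕ).succ / ((3:ℕ).factorial * 3)) := hb
        _ = |x|^3 * (2/9) := by norm_num [Nat.factorial]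
        _ ≤ |x|^3 := by nlinarith [abs_nonneg x, pow_nonneg (abs_nonneg x) 3]
        _ = 1 * |x^2| * |x| := by rw [abs_pow]; ring
  exact hO.trans_isLittleO (by simpa using Asymptotics.isLittleO_pow_id (𝕜 := ℝ) (n := 2) one_lt_two)

/-- For a hypersurface singularity with weights `w₁,…,w₄` and degree `d`, normalized so that
the canonical form has charge two (`Wᵢ = 2wᵢ/I`, `D = 2d/I` with `I = ∑wᵢ - d > 0`), the
Hilbert series `H(s) = (1 - e^{-Ds})/∏(1 - e^{-Wᵢ s})` satisfies
`a₀ = lim_{s→0⁺} s³ H(s) = d(∑wᵢ - d)³/(8 w₁w₂w₃w₄)` and `a₁ = lim_{s→0⁺} s²(H(s)-a₀ s⁻³) = a₀`. -/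
theorem hypersurface_hilbert_a0_eq_a1
    (w₁ w₂ w₃ w₄ d : ℝ) (hw₁ : 0 < w₁) (hw₂ : 0 < w₂) (hw₃ : 0 < w₃) (hw₄ : 0 < w₄)
    (hd : 0 < d) (I : ℝ) (hI : I = w₁ + w₂ + w₃ + w₄ - d) (hIpos : 0 < I)
    (H : ℝ → ℝ)
    (hH : ∀ s : ℝ, 0 < s →
      H s = (1 - Real.exp (-(2 * d / I) * s)) /
        ((1 - Real.exp (-(2 * w₁ / I) * s)) * (1 - Real.exp (-(2 * w₂ / I) * s)) *
         (1 - Real.exp (-(2 * w₃ / I) * s)) * (1 - Real.exp (-(2 * w₄ / I) * s))))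
    (a₀ : ℝ) (ha₀ : a₀ = d * (w₁ + w₂ + w₃ + w₄ - d) ^ 3 / (8 * w₁ * w₂ * w₃ * w₄)) :
    Filter.Tendsto (fun s : ℝ => s ^ 3 * H s) (nhdsWithin 0 (Set.Ioi 0)) (nhds a₀)
      ∧ Filter.Tendsto (fun s : ℝ => s ^ 2 * (H s - a₀ / s ^ 3))
          (nhdsWithin 0 (Set.Ioi 0)) (nhds a₀) := by
  have hIne : I ≠ 0 := hIpos.ne'
  set D : ℝ := 2 * d / I with hD
  set V₁ : ℝ := 2 * w₁ / I with hV₁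
  set V₂ : ℝ := 2 * w₂ / I with hV₂
  set V₃ : ℝ := 2 * w₃ / I with hV₃
  set V₄ : ℝ := 2 * w₄ / I with hV₄
  have hDpos : 0 < D := by rw [hD]; positivity
  have hV₁pos : 0 < V₁ := by rw [hV₁]; positivity
  have hV₂pos : 0 < V₂ := by rw [hV₂]; positivity
  have hV₃pos : 0 < V₃ := by rw [hV₃]; positivity
  have hV₄pos : 0 < V₄ := by rw [hV₄]; positivity
  set F : ℝ → ℝ := fun s =>
    phiAux (D * s) / (phiAux (V₁ * s) * phiAux (V₂ * s) * phiAux (V₃ * s) * phiAux (V₄ * s))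
    with hF
  have hF0 : F 0 = 1 := by simp [hF, phiAux_zero]
  -- derivative of s ↦ phiAux (c * s) at 0
  have hcomp : ∀ c : ℝ, HasDerivAt (fun s : ℝ => phiAux (c * s)) (-(1/2) * c) 0 := by
    intro c
    have hout : HasDerivAt phiAux (-(1/2)) (c * 0) := by rw [mul_zero]; exact hasDerivAt_phiAux
    have hin : HasDerivAt (fun s : ℝ => c * s) c 0 := by
      simpa using (hasDerivAt_id (0:ℝ)).const_mul c
    exact hout.comp 0 hin
  have hP : HasDerivAt
      (fun s => phiAux (V₁ * s) * phiAux (V₂ * s) * phiAux (V₃ * s) * phiAux (V₄ * s))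
      (-(1/2) * (V₁ + V₂ + V₃ + V₄)) 0 := by
    have h := (((hcomp V₁).mul (hcomp V₂)).mul (hcomp V₃)).mul (hcomp V₄)
    refine h.congr_deriv ?_
    simp [phiAux_zero]
    ring
  have hFd : HasDerivAt F 1 0 := by
    have h := (hcomp D).div hP (by simp [phiAux_zero])
    refine h.congr_deriv ?_
    simp [phiAux_zero]
    have : V₁ + V₂ + V₃ + V₄ - D = 2 := by
      rw [hV₁, hV₂, hV₃, hV₄, hD]
      field_simp
      rw [hI]
    linarith [this]
  have ha₀2 : a₀ = D / (V₁ * V₂ * V₃ * V₄) := by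
    rw [ha₀, hD, hV₁, hV₂, hV₃, hV₄, ← hI]
    field_simp
    ring
  -- key algebraic identity on Ioi 0
  have hEq : ∀ s : ℝ, s ∈ Set.Ioi (0:ℝ) → s ^ 3 * H s = a₀ * F s := by
    intro s hs
    have hs' : (0:ℝ) < s := hs
    have fac : ∀ x : ℝ, 0 < x → 1 - Real.exp (-x * s) = (x * s) * phiAux (x * s) := by
      intro x hx
      rw [neg_mul, phiAux_ne (mul_pos hx hs').ne']
      field_simp
    rw [hH s hs', fac D hDpos, fac V₁ hV₁pos, fac V₂ hV₂pos, fac V₃ hV₃pos, fac V₄ hV₄pos,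
      ha₀2, hF]
    have p1 := phiAux_pos (mul_pos hV₁pos hs')
    have p2 := phiAux_pos (mul_pos hV₂pos hs')
    have p3 := phiAux_pos (mul_pos hV₃pos hs')
    have p4 := phiAux_pos (mul_pos hV₄pos hs')
    field_simp
  constructor
  · have hFc : Tendsto F (nhdsWithin 0 (Set.Ioi 0)) (nhds 1) := by
      have h := hFd.continuousAt.tendsto
      rw [hF0] at h
      exact h.mono_left nhdsWithin_le_nhds
    have h2 : Tendsto (fun s => a₀ * F s) (nhdsWithin 0 (Set.Ioi 0)) (nhds (a₀ * 1)) :=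
      tendsto_const_nhds.mul hFc
    rw [mul_one] at h2
    refine h2.congr' ?_
    filter_upwards [self_mem_nhdsWithin] with s hs
    exact (hEq s hs).symm
  · have hslope : Tendsto (slope F 0) (nhdsWithin 0 {(0:ℝ)}ᶜ) (nhds 1) :=
      hasDerivAt_iff_tendsto_slope.mp hFd
    have hmono : nhdsWithin (0:ℝ) (Set.Ioi 0) ≤ nhdsWithin 0 {(0:ℝ)}ᶜ :=
      nhdsWithin_mono _ (fun x hx => Set.mem_compl_singleton_iff.mpr (ne_of_gt hx))
    have h2 : Tendsto (fun s => a₀ * slope F 0 s) (nhdsWithin 0 (Set.Ioi 0)) (nhds (a₀ * 1)) :=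
      tendsto_const_nhds.mul (hslope.mono_left hmono)
    rw [mul_one] at h2
    refine h2.congr' ?_
    filter_upwards [self_mem_nhdsWithin] with s hs
    have hs' : (0:ℝ) < s := hs
    have h3 := hEq s hs
    rw [slope_def_field, hF0, sub_zero]
    have h4 : s ^ 2 * (H s - a₀ / s ^ 3) = (s ^ 3 * H s - a₀) / s := by
      field_simp
    rw [h4, h3]
    field_simp
end

section
/- Let $k\geq 5$ be an integer and define $\phi_k(\epsilon)=\frac{2(k+2)^{3}}{(\epsilon-2)^{2}\,k^{2}\,(\epsilon k+4)}$. Then there exists $\epsilon\in(0,2)$ such that $\phi_k(\epsilon) < \phi_k(0) = \frac{(k+2)^{3}}{8k^{2}}$. -/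
open Set

/-- For `k ≥ 5`, the volume function `φₖ(ε) = 2(k+2)³/((ε-2)²k²(εk+4))` attains a value on
`(0,2)` strictly smaller than `φₖ(0) = (k+2)³/(8k²)`: the central fibre destabilizes. -/
theorem destabilizing_volume_decrease
    (k : ℕ) (hk : 5 ≤ k) (φ : ℝ → ℝ)
    (hφ : ∀ ε : ℝ, φ ε = 2 * ((k : ℝ) + 2) ^ 3 / ((ε - 2) ^ 2 * (k : ℝ) ^ 2 * (ε * (k : ℝ) + 4))) :
    φ 0 = ((k : ℝ) + 2) ^ 3 / (8 * (k : ℝ) ^ 2)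
      ∧ ∃ ε ∈ Set.Ioo (0 : ℝ) 2, φ ε < φ 0 := by
  have hk5 : (5 : ℝ) ≤ (k : ℝ) := by exact_mod_cast hk
  have hkpos : (0 : ℝ) < (k : ℝ) := by linarith
  have h0 : φ 0 = ((k : ℝ) + 2) ^ 3 / (8 * (k : ℝ) ^ 2) := by
    rw [hφ 0]; ring_nf
  refine ⟨h0, 1 / (k : ℝ), ⟨by positivity, by
    rw [div_lt_iff₀ hkpos]; linarith⟩, ?_⟩
  rw [hφ (1 / (k : ℝ)), h0]
  have hcube : (0 : ℝ) < ((k : ℝ) + 2) ^ 3 := by positivity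
  have hkne : (k : ℝ) ≠ 0 := ne_of_gt hkpos
  have hx : (1 / (k : ℝ)) * (k : ℝ) + 4 = 5 := by field_simp; norm_num
  rw [hx]
  have hkey : (1 / (k : ℝ) - 2) ^ 2 * (k : ℝ) ^ 2 = (1 - 2 * (k : ℝ)) ^ 2 := by
    field_simp
  have hden1 : (0 : ℝ) < (1 / (k : ℝ) - 2) ^ 2 * (k : ℝ) ^ 2 * 5 := by
    rw [hkey]; nlinarith
  rw [div_lt_div_iff₀ hden1 (by positivity), hkey]
  nlinarith [mul_pos hcube (show (0:ℝ) < 4*(k:ℝ)^2-20*(k:ℝ)+5 by nlinarith)]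
end

section
/- Let $w_1,w_2,w_3,w_4$ be positive integers and let $f\in\mathbb{C}[z_1,z_2,z_3,z_4]$ be weighted homogeneous of weighted degree $d$ with respect to the weights $w_i$, such that the partial derivatives $\partial f/\partial z_1,\dots,\partial f/\partial z_4$ form a regular sequence in $\mathbb{C}[z_1,\dots,z_4]$. Assume $w_k + w_l < d$ for all $k\neq l$. If $g_1,\dots,g_4\in\mathbb{C}[z_1,\dots,z_4]$ are weighted homogeneous with $g_k$ of weighted degree $w_k$ and $\sum_{k=1}^{4} g_k\,\frac{\partial f}{\partial z_k} = 0$, then $g_k=0$ for all $k$. -/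
open MvPolynomial

/-- In a commutative ring, if `x` acts regularly on `R ⧸ I` and `a * x ∈ I`, then `a ∈ I`. -/
lemma mem_of_mul_mem_of_smulRegular {R : Type*} [CommRing R] {I : Ideal R} {x a : R}
    (h : IsSMulRegular (R ⧸ (I • ⊤ : Submodule R R)) x) (hax : a * x ∈ I) : a ∈ I := by
  have hI : (I • ⊤ : Submodule R R) = I := by
    rw [smul_eq_mul, Ideal.mul_top]
  have h1 : x • (Submodule.Quotient.mk a : R ⧸ (I • ⊤ : Submodule R R)) = 0 := by
    rw [← Submodule.Quotient.mk_smul, Submodule.Quotient.mk_eq_zero, hI, smul_eq_mul,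
      mul_comm]
    exact hax
  have h2 : (Submodule.Quotient.mk a : R ⧸ (I • ⊤ : Submodule R R)) = 0 :=
    h (by simpa using h1)
  rwa [Submodule.Quotient.mk_eq_zero, hI] at h2

/-- Every low-weight coefficient of an element of an ideal spanned by polynomials whose
coefficients all sit in high weights vanishes. -/
lemma coeff_eq_zero_of_mem_span_high {σ : Type*} {S : Set (MvPolynomial σ ℂ)}
    {w : σ → ℕ} {m : ℕ}
    (hS : ∀ s ∈ S, ∀ μ : σ →₀ ℕ, coeff μ s ≠ 0 → m < Finsupp.weight w μ)
    {q : MvPolynomial σ ℂ} (hq : q ∈ Ideal.span S) :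
    ∀ μ : σ →₀ ℕ, Finsupp.weight w μ ≤ m → coeff μ q = 0 := by
  classical
  induction hq using Submodule.span_induction with
  | mem s hs =>
    intro μ hμ
    by_contra hc
    exact absurd hμ (not_le.mpr (hS s hs μ hc))
  | zero => intro μ _; simp
  | add x y _ _ hx hy =>
    intro μ hμ
    rw [coeff_add, hx μ hμ, hy μ hμ, add_zero]
  | smul r x _ hx =>
    intro μ hμ
    rw [smul_eq_mul, coeff_mul]
    apply Finset.sum_eq_zero
    rintro ⟨a, b⟩ hab
    rw [Finset.HasAntidiagonal.mem_antidiagonal] at hab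
    have hb : (Finsupp.weight w) b ≤ m := by
      calc (Finsupp.weight w) b ≤ (Finsupp.weight w) a + (Finsupp.weight w) b := le_add_self
        _ = (Finsupp.weight w) μ := by rw [← map_add, hab]
        _ ≤ m := hμ
    rw [hx b hb, mul_zero]

/-- A weighted homogeneous polynomial of degree `m` lying in an ideal generated by
weighted homogeneous polynomials of degrees `> m` is zero. -/
lemma eq_zero_of_mem_span_high {σ : Type*} {S : Set (MvPolynomial σ ℂ)}
    {w : σ → ℕ} {m : ℕ}
    (hS : ∀ s ∈ S, ∀ μ : σ →₀ ℕ, coeff μ s ≠ 0 → m < Finsupp.weight w μ)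
    {p : MvPolynomial σ ℂ} (hp : p.IsWeightedHomogeneous w m)
    (hmem : p ∈ Ideal.span S) : p = 0 := by
  ext μ
  rw [coeff_zero]
  by_cases hμ : (Finsupp.weight w) μ = m
  · exact coeff_eq_zero_of_mem_span_high hS hmem μ hμ.le
  · by_contra hc
    exact hμ (hp hc)


/-- Weight bound for coefficients of a partial derivative of a weighted homogeneous
polynomial. -/
lemma weight_add_eq_of_coeff_pderiv_ne_zero {σ : Type*} {w : σ → ℕ} {d : ℕ}
    {f : MvPolynomial σ ℂ} {k : σ} (hf : f.IsWeightedHomogeneous w d)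
    {μ : σ →₀ ℕ} (hc : coeff μ (pderiv k f) ≠ 0) :
    Finsupp.weight w μ + w k = d := by
  classical
  conv at hc => rw [f.as_sum]
  rw [map_sum] at hc
  simp_rw [pderiv_monomial] at hc
  rw [coeff_sum] at hc
  obtain ⟨ν, hν, hcoef⟩ := Finset.exists_ne_zero_of_sum_ne_zero hc
  rw [coeff_monomial] at hcoef
  split_ifs at hcoef with heq
  · have hνf : coeff ν f ≠ 0 := fun h => hcoef (by rw [h, zero_mul])
    have hνk : ν k ≠ 0 := by
      intro h
      rw [h] at hcoef
      simp at hcoef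
    have hwd : Finsupp.weight w ν = d := hf hνf
    have hsum : μ + Finsupp.single k 1 = ν := by
      subst heq
      ext j
      by_cases hj : j = k
      · subst hj
        simp [Finsupp.single_apply, Nat.sub_add_cancel (Nat.one_le_iff_ne_zero.mpr hνk)]
      · simp [Finsupp.single_apply, Ne.symm hj]
    have : Finsupp.weight w (Finsupp.single k 1) = w k := by
      simp [Finsupp.weight_apply, Finsupp.sum_single_index]
    rw [← hwd, ← hsum, map_add, this]
  · exact absurd rfl hcoef

/-- Rigidity of quasi-homogeneous isolated singularities: if `f` is weighted homogeneous of
weighted degree `d` with respect to positive weights `w₁,…,w₄` whose partial derivatives form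
a regular sequence, and `wₖ + wₗ < d` for all `k ≠ l`, then any weighted-homogeneous syzygy
`∑ₖ gₖ ∂f/∂zₖ = 0` with `gₖ` of weighted degree `wₖ` is trivial. -/
theorem no_infinitesimal_symmetry
    (w : Fin 4 → ℕ) (hw : ∀ k, 0 < w k) (d : ℕ)
    (f : MvPolynomial (Fin 4) ℂ)
    (hf : f.IsWeightedHomogeneous w d)
    (hreg : RingTheory.Sequence.IsRegular (MvPolynomial (Fin 4) ℂ)
      [MvPolynomial.pderiv 0 f, MvPolynomial.pderiv 1 f,
       MvPolynomial.pderiv 2 f, MvPolynomial.pderiv 3 f])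
    (hwd : ∀ k l : Fin 4, k ≠ l → w k + w l < d)
    (g : Fin 4 → MvPolynomial (Fin 4) ℂ)
    (hg : ∀ k, (g k).IsWeightedHomogeneous w (w k))
    (hsum : ∑ k, g k * MvPolynomial.pderiv k f = 0) :
    ∀ k, g k = 0 := by
  classical
  have hbound : ∀ (k l : Fin 4), k ≠ l → ∀ μ : Fin 4 →₀ ℕ,
      coeff μ (MvPolynomial.pderiv l f) ≠ 0 → w k < Finsupp.weight w μ := by
    intro k l hkl μ hc
    have h1 := weight_add_eq_of_coeff_pderiv_ne_zero hf hc
    have h2 := hwd k l hkl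
    omega
  have h0 : g 0 * pderiv 0 f + g 1 * pderiv 1 f + g 2 * pderiv 2 f
      + g 3 * pderiv 3 f = 0 := by
    rw [← hsum, Fin.sum_univ_four]
  -- eliminate g 3
  have hreg3 := hreg.toIsWeaklyRegular.regular_mod_prev 3 (by norm_num)
  simp only [List.take_succ_cons, List.take_zero, List.getElem_cons_succ,
    List.getElem_cons_zero] at hreg3
  have hmem3 : g 3 * pderiv 3 f ∈
      Ideal.span {r | r ∈ [pderiv (0 : Fin 4) f, pderiv 1 f, pderiv 2 f]} := by
    have he : g 3 * pderiv 3 f = -(g 0 * pderiv 0 f) - g 1 * pderiv 1 f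
        - g 2 * pderiv 2 f := by linear_combination h0
    rw [he]
    refine Ideal.sub_mem _ (Ideal.sub_mem _ (neg_mem ?_) ?_) ?_ <;>
      exact Ideal.mul_mem_left _ _ (Ideal.subset_span (by simp))
  have hg3 : g 3 = 0 := by
    refine eq_zero_of_mem_span_high ?_ (hg 3)
      (mem_of_mul_mem_of_smulRegular hreg3 hmem3)
    intro s hs μ hc
    simp only [Set.mem_setOf_eq, List.mem_cons, List.not_mem_nil, or_false] at hs
    rcases hs with h|h|h <;> subst h
    · exact hbound 3 0 (by decide) μ hc
    · exact hbound 3 1 (by decide) μ hc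
    · exact hbound 3 2 (by decide) μ hc
  rw [hg3, zero_mul, add_zero] at h0
  -- eliminate g 2
  have hreg2 := hreg.toIsWeaklyRegular.regular_mod_prev 2 (by norm_num)
  simp only [List.take_succ_cons, List.take_zero, List.getElem_cons_succ,
    List.getElem_cons_zero] at hreg2
  have hmem2 : g 2 * pderiv 2 f ∈
      Ideal.span {r | r ∈ [pderiv (0 : Fin 4) f, pderiv 1 f]} := by
    have he : g 2 * pderiv 2 f = -(g 0 * pderiv 0 f) - g 1 * pderiv 1 f := by
      linear_combination h0
    rw [he]
    refine Ideal.sub_mem _ (neg_mem ?_) ?_ <;>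
      exact Ideal.mul_mem_left _ _ (Ideal.subset_span (by simp))
  have hg2 : g 2 = 0 := by
    refine eq_zero_of_mem_span_high ?_ (hg 2)
      (mem_of_mul_mem_of_smulRegular hreg2 hmem2)
    intro s hs μ hc
    simp only [Set.mem_setOf_eq, List.mem_cons, List.not_mem_nil, or_false] at hs
    rcases hs with h|h <;> subst h
    · exact hbound 2 0 (by decide) μ hc
    · exact hbound 2 1 (by decide) μ hc
  rw [hg2, zero_mul, add_zero] at h0
  -- eliminate g 1
  have hreg1 := hreg.toIsWeaklyRegular.regular_mod_prev 1 (by norm_num)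
  simp only [List.take_succ_cons, List.take_zero, List.getElem_cons_succ,
    List.getElem_cons_zero] at hreg1
  have hmem1 : g 1 * pderiv 1 f ∈
      Ideal.span {r | r ∈ [pderiv (0 : Fin 4) f]} := by
    have he : g 1 * pderiv 1 f = -(g 0 * pderiv 0 f) := by linear_combination h0
    rw [he]
    exact neg_mem (Ideal.mul_mem_left _ _ (Ideal.subset_span (by simp)))
  have hg1 : g 1 = 0 := by
    refine eq_zero_of_mem_span_high ?_ (hg 1)
      (mem_of_mul_mem_of_smulRegular hreg1 hmem1)
    intro s hs μ hc
    simp only [Set.mem_setOf_eq, List.mem_cons, List.not_mem_nil, or_false] at hs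
    subst hs
    exact hbound 1 0 (by decide) μ hc
  rw [hg1, zero_mul, add_zero] at h0
  -- eliminate g 0
  have hreg0 := hreg.toIsWeaklyRegular.regular_mod_prev 0 (by norm_num)
  simp only [List.take_zero, List.getElem_cons_zero] at hreg0
  have hmem0 : g 0 * pderiv 0 f ∈
      Ideal.span {r | r ∈ ([] : List (MvPolynomial (Fin 4) ℂ))} := by
    rw [h0]
    exact Ideal.zero_mem _
  have hg0 : g 0 = 0 := by
    refine eq_zero_of_mem_span_high ?_ (hg 0)
      (mem_of_mul_mem_of_smulRegular hreg0 hmem0)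
    intro s hs μ hc
    simp at hs
  intro k
  fin_cases k <;> assumption
end
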